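/- Let a > 0, ε > 0, b = −(2 + ε)a, α > 0, β < 0, and n ∈ ℕ. Then the maximum of |ρ_n(s, α, β)| over the closed right half-plane {s ∈ ℂ : Re s ≥ 0} is attained on the imaginary axis; that is, for every s with Re s ≥ 0, |ρ_n(s, α, β)| ≤ sup_{ω ∈ ℝ} |ρ_n(iω, α, β)|. -/

import Mathlib

open Complex

/-- The root `λ₁(s) = ((s - b) + √((b - s)² - 4a²))/(2a)` of the characteristic equation,
with the principal branch of the complex square root. -/
noncomputable def lam1 (a b : ℝ) (s : ℂ) : ℂ :=
  ((s - (b : ℂ)) + (((b : ℂ) - s) ^ 2 - 4 * (a : ℂ) ^ 2) ^ ((1 : ℂ) / 2)) / (2 * (a : ℂ))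

/-- The convergence factor of the OWR algorithm with overlap `n` and parameters `α, β`:
`ρ_n(s,α,β) = ((α+1-λ₁)/(λ₁(1+α)-1)) ((λ₁+β-1)/(1+(β-1)λ₁)) (1/λ₁²)ⁿ` with `λ₁ = λ₁(s)`. -/
noncomputable def rhoOWR (a b : ℝ) (n : ℕ) (s : ℂ) (α β : ℝ) : ℂ :=
  (((α : ℂ) + 1 - lam1 a b s) / (lam1 a b s * (1 + (α : ℂ)) - 1)) *
    ((lam1 a b s + (β : ℂ) - 1) / (1 + ((β : ℂ) - 1) * lam1 a b s)) *
    (1 / (lam1 a b s) ^ 2) ^ n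

lemma re_cpow_half_nonneg (w : ℂ) : 0 ≤ (w ^ ((1 : ℂ) / 2)).re := by
  rcases eq_or_ne w 0 with h | h
  · simp [h, Complex.zero_cpow (by norm_num : (1 : ℂ) / 2 ≠ 0)]
  · rw [Complex.cpow_def_of_ne_zero h, Complex.exp_re]
    refine mul_nonneg (Real.exp_pos _).le (Real.cos_nonneg_of_mem_Icc ?_)
    have him : (Complex.log w * ((1 : ℂ) / 2)).im = w.arg / 2 := by
      simp [Complex.mul_im, Complex.log_im]
      ring
    rw [him]
    have h1 := Complex.neg_pi_lt_arg w
    have h2 := Complex.arg_le_pi w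
    constructor <;> [linarith; linarith]

lemma abs_le_abs_of_normSq {x y : ℂ} (h : Complex.normSq x ≤ Complex.normSq y) :
    ‖x‖ ≤ ‖y‖ := by
  rw [Complex.norm_def, Complex.norm_def]
  exact Real.sqrt_le_sqrt h

lemma slit_mem (a ε : ℝ) (ha : 0 < a) (hε : 0 < ε) (s : ℂ) (hsre : -(ε * a) < s.re) :
    ((((-(2 + ε) * a : ℝ)) : ℂ) - s) ^ 2 - 4 * (a : ℂ) ^ 2 ∈ Complex.slitPlane := by
  set b : ℝ := -(2 + ε) * a with hb
  have hre : (((b : ℂ) - s) ^ 2 - 4 * (a : ℂ) ^ 2).re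
      = (b - s.re) ^ 2 - s.im ^ 2 - 4 * a ^ 2 := by
    simp [Complex.sub_re, Complex.sub_im, Complex.mul_re, Complex.mul_im, pow_two] <;> ring
  have him : (((b : ℂ) - s) ^ 2 - 4 * (a : ℂ) ^ 2).im = 2 * (b - s.re) * (-s.im) := by
    simp [Complex.sub_re, Complex.sub_im, Complex.mul_re, Complex.mul_im, pow_two] <;> ring
  have hblt : b - s.re < -(2 * a) := by
    simp only [hb]; nlinarith
  rcases eq_or_ne s.im 0 with h0 | h0
  · left
    rw [hre, h0]
    nlinarith
  · right
    rw [him]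
    have : b - s.re ≠ 0 := by nlinarith
    intro hcon
    rcases mul_eq_zero.1 hcon with h | h
    · rcases mul_eq_zero.1 h with h | h
      · norm_num at h
      · exact this h
    · exact h0 (by linarith [neg_eq_zero.1 h])

lemma lam1_re_gt (a ε : ℝ) (ha : 0 < a) (hε : 0 < ε) (s : ℂ) (hsre : -(ε * a) < s.re) :
    1 < (lam1 a (-(2 + ε) * a) s).re := by
  set b : ℝ := -(2 + ε) * a with hb
  have h2a : (2 : ℂ) * (a : ℂ) = ((2 * a : ℝ) : ℂ) := by push_cast; ring
  have hX := re_cpow_half_nonneg ((((b : ℝ) : ℂ) - s) ^ 2 - 4 * (a : ℂ) ^ 2)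
  have hnum : 2 * a < ((s - ((b : ℝ) : ℂ)) +
      ((((b : ℝ) : ℂ) - s) ^ 2 - 4 * (a : ℂ) ^ 2) ^ ((1 : ℂ) / 2)).re := by
    rw [Complex.add_re, Complex.sub_re, Complex.ofReal_re]
    have : 2 * a < s.re - b := by simp only [hb]; nlinarith
    linarith
  rw [lam1, h2a, Complex.div_ofReal_re]
  rw [lt_div_iff₀ (by positivity)]
  linarith

lemma rho_abs_le_one (a b α β : ℝ) (hα : 0 < α) (hβ : β < 0) (n : ℕ) (s : ℂ)
    (hL : 1 < (lam1 a b s).re) :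
    ‖rhoOWR a b n s α β‖ ≤ 1 := by
  set L : ℂ := lam1 a b s with hLdef
  have habs : 1 ≤ ‖L‖ := le_trans hL.le (Complex.re_le_norm L)
  have hQ : 1 ≤ L.re * L.re + L.im * L.im := by
    have := Complex.sq_norm L
    rw [Complex.normSq_apply] at this
    nlinarith
  -- first factor
  have h1 : ‖((α : ℂ) + 1 - L) / (L * (1 + (α : ℂ)) - 1)‖ ≤ 1 := by
    rw [norm_div]
    refine div_le_one_of_le₀ ?_ (norm_nonneg _)
    refine abs_le_abs_of_normSq ?_
    simp only [Complex.normSq_apply, Complex.sub_re, Complex.sub_im, Complex.add_re,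
      Complex.add_im, Complex.mul_re, Complex.mul_im, Complex.one_re, Complex.one_im,
      Complex.ofReal_re, Complex.ofReal_im]
    nlinarith [mul_nonneg (show (0:ℝ) ≤ (1 + α) ^ 2 - 1 by nlinarith)
      (show (0:ℝ) ≤ L.re * L.re + L.im * L.im - 1 by linarith)]
  -- second factor
  have h2 : ‖(L + (β : ℂ) - 1) / (1 + ((β : ℂ) - 1) * L)‖ ≤ 1 := by
    rw [norm_div]
    refine div_le_one_of_le₀ ?_ (norm_nonneg _)
    refine abs_le_abs_of_normSq ?_
    simp only [Complex.normSq_apply, Complex.sub_re, Complex.sub_im, Complex.add_re,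
      Complex.add_im, Complex.mul_re, Complex.mul_im, Complex.one_re, Complex.one_im,
      Complex.ofReal_re, Complex.ofReal_im]
    nlinarith [mul_nonneg (show (0:ℝ) ≤ (β - 1) ^ 2 - 1 by nlinarith)
      (show (0:ℝ) ≤ L.re * L.re + L.im * L.im - 1 by linarith)]
  -- third factor
  have h3 : ‖(1 / L ^ 2) ^ n‖ ≤ 1 := by
    rw [norm_pow]
    refine pow_le_one₀ (norm_nonneg _) ?_
    rw [norm_div, norm_one, norm_pow]
    refine div_le_one_of_le₀ ?_ (by positivity)
    nlinarith
  calc ‖rhoOWR a b n s α β‖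
      = ‖((α : ℂ) + 1 - L) / (L * (1 + (α : ℂ)) - 1)‖ *
        ‖(L + (β : ℂ) - 1) / (1 + ((β : ℂ) - 1) * L)‖ *
        ‖(1 / L ^ 2) ^ n‖ := by
        rw [rhoOWR, norm_mul, norm_mul]
    _ ≤ 1 := by
        exact mul_le_one₀ (mul_le_one₀ h1 (norm_nonneg _) h2)
          (norm_nonneg _) h3

lemma rho_differentiableAt (a ε α β : ℝ) (ha : 0 < a) (hε : 0 < ε) (hα : 0 < α) (hβ : β < 0)
    (n : ℕ) (s : ℂ) (hsre : -(ε * a) < s.re) :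
    DifferentiableAt ℂ (fun z => rhoOWR a (-(2 + ε) * a) n z α β) s := by
  set b : ℝ := -(2 + ε) * a with hb
  have hLre : 1 < (lam1 a b s).re := lam1_re_gt a ε ha hε s hsre
  have habs : 1 ≤ ‖lam1 a b s‖ :=
    le_trans hLre.le (Complex.re_le_norm _)
  have hL : DifferentiableAt ℂ (fun z : ℂ => lam1 a b z) s := by
    have hw : DifferentiableAt ℂ (fun z : ℂ => (((b : ℝ) : ℂ) - z) ^ 2 - 4 * (a : ℂ) ^ 2) s := by
      fun_prop
    have hcp : DifferentiableAt ℂ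
        (fun z : ℂ => ((((b : ℝ) : ℂ) - z) ^ 2 - 4 * (a : ℂ) ^ 2) ^ ((1 : ℂ) / 2)) s :=
      hw.cpow (differentiableAt_const _) (slit_mem a ε ha hε s hsre)
    unfold lam1
    exact (((differentiableAt_id.sub (differentiableAt_const _)).add hcp).div_const _)
  have hL0 : lam1 a b s ≠ 0 := by
    intro h
    rw [h] at hLre
    simp at hLre
    linarith
  have hne1 : lam1 a b s * (1 + (α : ℂ)) - 1 ≠ 0 := by
    intro h
    rw [sub_eq_zero] at h
    have := congrArg (‖·‖) h
    rw [norm_mul, norm_one] at this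
    have hca : ‖(1 + (α : ℂ))‖ = 1 + α := by
      rw [show (1 + (α : ℂ)) = ((1 + α : ℝ) : ℂ) by push_cast; ring, Complex.norm_real, Real.norm_eq_abs,
        abs_of_pos (by linarith)]
    rw [hca] at this
    nlinarith
  have hne2 : 1 + ((β : ℂ) - 1) * lam1 a b s ≠ 0 := by
    intro h
    have h' : ((β : ℂ) - 1) * lam1 a b s = -1 := by linear_combination h - (1 : ℂ)
    have := congrArg (‖·‖) h'
    rw [norm_mul] at this
    have hcb : ‖((β : ℂ) - 1)‖ = 1 - β := by
      rw [show ((β : ℂ) - 1) = ((β - 1 : ℝ) : ℂ) by push_cast; ring, Complex.norm_real, Real.norm_eq_abs,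
        abs_of_neg (by linarith)]
      ring
    rw [hcb, show ‖(-1 : ℂ)‖ = 1 by simp] at this
    nlinarith
  unfold rhoOWR
  exact (((((differentiableAt_const _).sub hL).div
      ((hL.mul (differentiableAt_const _)).sub (differentiableAt_const _)) hne1).mul
    (((hL.add (differentiableAt_const _)).sub (differentiableAt_const _)).div
      ((differentiableAt_const _).add ((differentiableAt_const _).mul hL)) hne2)).mul
    (((differentiableAt_const _).div (hL.pow 2) (pow_ne_zero _ hL0)).pow n))

/-- For `a > 0`, `ε > 0`, `b = -(2 + ε)a`, `α > 0`, `β < 0` and any overlap `n`, the maximum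
of `|ρ_n(·, α, β)|` over the closed right half-plane is attained on the imaginary axis:
for every `s` with `Re s ≥ 0`, `|ρ_n(s, α, β)| ≤ sup_{ω ∈ ℝ} |ρ_n(iω, α, β)|`. -/
theorem owr_maximum_on_imaginary_axis (a ε α β : ℝ) (ha : 0 < a) (hε : 0 < ε)
    (hα : 0 < α) (hβ : β < 0) (n : ℕ) (s : ℂ) (hs : 0 ≤ s.re) :
    ‖rhoOWR a (-(2 + ε) * a) n s α β‖
      ≤ ⨆ ω : ℝ, ‖rhoOWR a (-(2 + ε) * a) n (Complex.I * (ω : ℂ)) α β‖ := by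
  set f : ℂ → ℂ := fun z => rhoOWR a (-(2 + ε) * a) n z α β with hf
  have hUmem : ∀ z : ℂ, 0 ≤ z.re → -(ε * a) < z.re := fun z hz => by nlinarith
  have hbound : ∀ z : ℂ, 0 ≤ z.re → ‖f z‖ ≤ 1 := fun z hz =>
    rho_abs_le_one a _ α β hα hβ n z (lam1_re_gt a ε ha hε z (hUmem z hz))
  set C : ℝ := ⨆ ω : ℝ, ‖f (Complex.I * (ω : ℂ))‖ with hC
  have hbdd : BddAbove (Set.range fun ω : ℝ => ‖f (Complex.I * (ω : ℂ))‖) := by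
    refine ⟨1, ?_⟩
    rintro x ⟨ω, rfl⟩
    exact hbound _ (by simp)
  have hd : DiffContOnCl ℂ f {z : ℂ | 0 < z.re} := by
    refine DifferentiableOn.diffContOnCl ?_
    rw [Complex.closure_setOf_lt_re]
    intro z hz
    exact (rho_differentiableAt a ε α β ha hε hα hβ n z (hUmem z hz)).differentiableWithinAt
  have hexp : ∃ c < (2 : ℝ), ∃ B, f =O[Bornology.cobounded ℂ ⊓ Filter.principal {z : ℂ | 0 < z.re}]
      fun z => Real.exp (B * ‖z‖ ^ c) := by
    refine ⟨1, one_lt_two, 0, Asymptotics.IsBigO.of_bound 1 ?_⟩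
    rw [Filter.eventually_inf_principal]
    refine Filter.Eventually.of_forall fun z hz => ?_
    simp only [zero_mul, Real.exp_zero, norm_one, mul_one]
    exact hbound z (le_of_lt hz)
  have hre : Filter.IsBoundedUnder (· ≤ ·) Filter.atTop fun x : ℝ => ‖f x‖ := by
    refine Filter.isBoundedUnder_of_eventually_le (a := 1) ?_
    filter_upwards [Filter.eventually_ge_atTop (0 : ℝ)] with x hx
    exact hbound _ (by simpa using hx)
  have him : ∀ x : ℝ, ‖f ((x : ℂ) * Complex.I)‖ ≤ C := by
    intro x
    rw [mul_comm]
    exact le_ciSup hbdd x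
  have := PhragmenLindelof.right_half_plane_of_bounded_on_real hd hexp hre him hs
  exact this
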